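/- In the residuated lattice A^◇ on pairs {(a,b) : a ≤ b} of a residuated lattice A, negation satisfies ¬(a,b) = (¬b, ¬a); in particular (0,1) is a fixed point of negation. Moreover A^◇ is involutive (satisfies ¬¬x = x) if and only if A is, and A^◇ is distributive if and only if A is. -/

import Mathlib

class ResLat (A : Type*) extends Lattice A, CommMonoid A where
  rbot : A
  himp : A → A → A
  rbot_le : ∀ a : A, rbot ≤ a
  le_one : ∀ a : A, a ≤ 1
  resid : ∀ a b c : A, a * b ≤ c ↔ a ≤ himp b c

namespace ResLat

variable {A : Type*} [ResLat A]

def rneg (a : A) : A := himp a rbot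

def Nilpotent (a : A) : Prop := ∃ n : ℕ, 1 ≤ n ∧ a ^ n = rbot

def Unity (a : A) : Prop := ∀ n : ℕ, 1 ≤ n → Nilpotent (rneg (a ^ n))

def ImpFilter (F : Set A) : Prop :=
  (1 : A) ∈ F ∧ ∀ x y : A, x ∈ F → himp x y ∈ F → y ∈ F

def MaxImpFilter (F : Set A) : Prop :=
  ImpFilter F ∧ F ≠ Set.univ ∧
    ∀ G : Set A, ImpFilter G → F ⊆ G → G = F ∨ G = Set.univ

def Rad (A : Type*) [ResLat A] : Set A :=
  { x | ∀ F : Set A, MaxImpFilter F → x ∈ F }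

def Ds (A : Type*) [ResLat A] : Set A := { x | rneg x = rbot }

def Simple (A : Type*) [ResLat A] : Prop :=
  Nontrivial A ∧ ∀ F : Set A, ImpFilter F → F = {1} ∨ F = Set.univ

def IsHom {B : Type*} [ResLat B] (f : A → B) : Prop :=
  (∀ x y : A, f (x * y) = f x * f y) ∧
  (∀ x y : A, f (himp x y) = himp (f x) (f y)) ∧
  (∀ x y : A, f (x ⊓ y) = f x ⊓ f y) ∧
  (∀ x y : A, f (x ⊔ y) = f x ⊔ f y) ∧
  f rbot = rbot ∧ f 1 = 1

end ResLat

open ResLat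

abbrev Diam (A : Type*) [ResLat A] : Type _ := {p : A × A // p.1 ≤ p.2}

section Aux

variable {A : Type*} [ResLat A]

lemma himp_mul_le' (b c : A) : himp b c * b ≤ c := (resid _ _ _).2 le_rfl

lemma mul_le_mul_left'' (c : A) {a b : A} (h : a ≤ b) : c * a ≤ c * b := by
  rw [mul_comm c a]
  exact (resid a c (c * b)).2
    (h.trans ((resid b c (c * b)).1 (by rw [mul_comm]))) 

lemma himp_anti {a b : A} (h : a ≤ b) (c : A) : himp b c ≤ himp a c :=
  (resid _ _ _).1 ((mul_le_mul_left'' (himp b c) h).trans (himp_mul_le' b c))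

lemma rneg_anti {a b : A} (h : a ≤ b) : rneg b ≤ rneg a := himp_anti h _

lemma rneg_one : rneg (1 : A) = rbot :=
  le_antisymm (by simpa [rneg] using himp_mul_le' (1 : A) (rbot : A)) (rbot_le _)

lemma rneg_rbot : rneg (rbot : A) = 1 :=
  le_antisymm (le_one _) ((resid 1 rbot rbot).1 (by rw [one_mul]))

end Aux

theorem stmt9 (A : Type*) [ResLat A] (L : ResLat (Diam A))
    (hmul : ∀ p q : Diam A,
      ((letI := L; p * q) : Diam A).val =
        (p.val.1 * q.val.1, (p.val.1 * q.val.2) ⊔ (q.val.1 * p.val.2)))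
    (hhimp : ∀ p q : Diam A,
      (L.himp p q).val =
        (himp p.val.1 q.val.1 ⊓ himp p.val.2 q.val.2, himp p.val.1 q.val.2))
    (hinf : ∀ p q : Diam A,
      ((letI := L; p ⊓ q) : Diam A).val = (p.val.1 ⊓ q.val.1, p.val.2 ⊓ q.val.2))
    (hsup : ∀ p q : Diam A,
      ((letI := L; p ⊔ q) : Diam A).val = (p.val.1 ⊔ q.val.1, p.val.2 ⊔ q.val.2))
    (hbot : L.rbot.val = ((rbot : A), (rbot : A)))
    (hone : ((letI := L; 1) : Diam A).val = (1, 1)) :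
    (∀ p : Diam A, (L.himp p L.rbot).val = (rneg p.val.2, rneg p.val.1)) ∧
    (L.himp ⟨((rbot : A), (1 : A)), le_one rbot⟩ L.rbot =
      ⟨((rbot : A), (1 : A)), le_one rbot⟩) ∧
    ((∀ p : Diam A, L.himp (L.himp p L.rbot) L.rbot = p) ↔
      ∀ a : A, rneg (rneg a) = a) ∧
    ((∀ x y z : Diam A, (letI := L; x ⊓ (y ⊔ z)) = (letI := L; (x ⊓ y) ⊔ (x ⊓ z))) ↔
      ∀ x y z : A, x ⊓ (y ⊔ z) = (x ⊓ y) ⊔ (x ⊓ z)) := by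
  have key : ∀ p : Diam A, (L.himp p L.rbot).val = (rneg p.val.2, rneg p.val.1) := by
    intro p
    rw [hhimp, hbot]
    refine Prod.ext ?_ rfl
    exact inf_eq_right.2 (rneg_anti p.property)
  refine ⟨key, ?_, ?_, ?_⟩
  · apply Subtype.ext
    rw [key]
    simp [rneg_one, rneg_rbot]
  · constructor
    · intro h a
      have := congrArg Subtype.val (h ⟨(a, a), le_rfl⟩)
      rw [key, key] at this
      simpa using congrArg Prod.fst this
    · intro h p
      apply Subtype.ext
      rw [key, key]
      exact Prod.ext (by simpa using h p.val.1) (by simpa using h p.val.2)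
  · constructor
    · intro h x y z
      have := congrArg Subtype.val
        (h ⟨(x, x), le_rfl⟩ ⟨(y, y), le_rfl⟩ ⟨(z, z), le_rfl⟩)
      rw [hinf, hsup] at this
      rw [hsup, hinf, hinf] at this
      simpa using congrArg Prod.fst this
    · intro h x y z
      apply Subtype.ext
      rw [hinf, hsup, hsup, hinf, hinf]
      exact Prod.ext (h _ _ _) (h _ _ _)
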